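/- arXiv:2509.07720 — 3 statements merged into one kernel-verified Lean document; each statement's English description precedes it below -/
import Mathlib

section
/- Let X be an admissible A-module that is simple, let P be an admissible A-module that is projective as an A-module, and let φ : P → X be a covering surjection. Suppose Y is an admissible A-module such that for every admissible A-module M one has dim_ℂ Hom_A(P, M) = dim_ℂ Hom_A(Y, M). Then P and Y are isomorphic as A-modules. -/
universe u v

section Aux
variable {A : Type u} [Ring A] [Algebra ℂ A]
variable {Z P X : Type v}
  [AddCommGroup Z] [Module ℂ Z] [Module A Z] [IsScalarTower ℂ A Z]
  [AddCommGroup P] [Module ℂ P] [Module A P] [IsScalarTower ℂ A P]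
  [AddCommGroup X] [Module ℂ X] [Module A X] [IsScalarTower ℂ A X]

/-- Post-composition with `φ` as a `ℂ`-linear map on `Hom_A` spaces. -/
def postComp (φ : P →ₗ[A] X) (Z : Type v) [AddCommGroup Z] [Module ℂ Z] [Module A Z]
    [IsScalarTower ℂ A Z] : (Z →ₗ[A] P) →ₗ[ℂ] (Z →ₗ[A] X) where
  toFun f := φ ∘ₗ f
  map_add' f g := by ext z; simp
  map_smul' c f := by ext z; simp

/-- Pre-composition with `g` as a `ℂ`-linear map on `Hom_A` spaces. -/
def preComp (g : Z →ₗ[A] P) (M : Type v) [AddCommGroup M] [Module ℂ M] [Module A M]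
    [IsScalarTower ℂ A M] : (P →ₗ[A] M) →ₗ[ℂ] (Z →ₗ[A] M) where
  toFun h := h ∘ₗ g
  map_add' f g := by ext z; simp
  map_smul' c f := by ext z; simp

lemma homFinDim [FiniteDimensional ℂ Z] [FiniteDimensional ℂ P] :
    FiniteDimensional ℂ (Z →ₗ[A] P) :=
  FiniteDimensional.of_injective (LinearMap.restrictScalarsₗ ℂ A Z P ℂ)
    (LinearMap.restrictScalars_injective ℂ)

lemma finrank_ker_postComp (φ : P →ₗ[A] X) [FiniteDimensional ℂ Z] [FiniteDimensional ℂ P] :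
    Module.finrank ℂ (LinearMap.ker (postComp φ Z)) =
      Module.finrank ℂ (Z →ₗ[A] ↥(LinearMap.ker φ)) := by
  haveI : FiniteDimensional ℂ ↥(LinearMap.ker φ) :=
    FiniteDimensional.finiteDimensional_submodule ((LinearMap.ker φ).restrictScalars ℂ)
  haveI : FiniteDimensional ℂ (Z →ₗ[A] ↥(LinearMap.ker φ)) := homFinDim
  set K := LinearMap.ker φ
  let ι : (Z →ₗ[A] ↥K) →ₗ[ℂ] (Z →ₗ[A] P) :=
    { toFun := fun f => K.subtype ∘ₗ f
      map_add' := fun f g => by ext z; simp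
      map_smul' := fun c f => by ext z; simp }
  have hinj : Function.Injective ι := by
    intro f g h
    ext z
    exact congrFun (congrArg (⇑) h) z
  have hrange : LinearMap.range ι = LinearMap.ker (postComp φ Z) := by
    ext f
    constructor
    · rintro ⟨f', rfl⟩
      simp only [LinearMap.mem_ker]
      ext z
      exact (f' z).2
    · intro hf
      simp only [LinearMap.mem_ker] at hf
      refine ⟨LinearMap.codRestrict K f (fun z => ?_), ?_⟩
      · show f z ∈ K
        exact congrFun (congrArg (⇑) hf) z
      · ext z; rfl
  rw [← hrange, LinearMap.finrank_range_of_inj hinj]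

end Aux

/-- **Dimension criterion** (Proposition 2.1 of the paper, abstracted):
if `P` is a projective admissible `A`-module admitting a covering surjection onto a
simple admissible `A`-module `X`, and `Y` is an admissible `A`-module whose
`Hom`-space dimensions into every admissible `A`-module agree with those of `P`,
then `P ≃ Y` as `A`-modules. -/
theorem stmt_0 (A : Type u) [Ring A] [Algebra ℂ A]
    (X : Type v) [AddCommGroup X] [Module ℂ X] [Module A X] [IsScalarTower ℂ A X]
    [FiniteDimensional ℂ X]
    (P : Type v) [AddCommGroup P] [Module ℂ P] [Module A P] [IsScalarTower ℂ A P]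
    [FiniteDimensional ℂ P]
    (Y : Type v) [AddCommGroup Y] [Module ℂ Y] [Module A Y] [IsScalarTower ℂ A Y]
    [FiniteDimensional ℂ Y]
    (hX : IsSimpleModule A X)
    (hP : Module.Projective A P)
    (φ : P →ₗ[A] X) (hφ : Function.Surjective φ)
    (hcover : ∀ (M : Type v) [AddCommGroup M] [Module ℂ M] [Module A M]
      [IsScalarTower ℂ A M] [FiniteDimensional ℂ M] (f : M →ₗ[A] P),
      Function.Surjective (φ ∘ₗ f) → Function.Surjective f)
    (hdim : ∀ (M : Type v) [AddCommGroup M] [Module ℂ M] [Module A M]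
      [IsScalarTower ℂ A M] [FiniteDimensional ℂ M],
      Module.finrank ℂ (P →ₗ[A] M) = Module.finrank ℂ (Y →ₗ[A] M)) :
    Nonempty (P ≃ₗ[A] Y) := by
  classical
  haveI := hX
  haveI : FiniteDimensional ℂ (P →ₗ[A] P) := homFinDim
  haveI : FiniteDimensional ℂ (Y →ₗ[A] P) := homFinDim
  haveI : FiniteDimensional ℂ (P →ₗ[A] X) := homFinDim
  haveI : FiniteDimensional ℂ (Y →ₗ[A] X) := homFinDim
  haveI : FiniteDimensional ℂ (P →ₗ[A] Y) := homFinDim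
  haveI : FiniteDimensional ℂ (Y →ₗ[A] Y) := homFinDim
  set K := LinearMap.ker φ with hK
  haveI : FiniteDimensional ℂ ↥K :=
    FiniteDimensional.finiteDimensional_submodule (K.restrictScalars ℂ)
  -- `postComp φ P` is surjective by projectivity of `P`
  have hsurjP : Function.Surjective (postComp φ P) := fun g => by
    obtain ⟨h, hh⟩ := Module.projective_lifting_property φ g hφ
    exact ⟨h, hh⟩
  -- `postComp φ Y` is surjective by a dimension count
  have hrangeY : LinearMap.range (postComp φ Y) = ⊤ := by
    apply Submodule.eq_top_of_finrank_eq
    have e1 := LinearMap.finrank_range_add_finrank_ker (postComp φ Y)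
    have e2 := LinearMap.finrank_range_add_finrank_ker (postComp φ P)
    have e3 : Module.finrank ℂ ↥(LinearMap.range (postComp φ P))
        = Module.finrank ℂ (P →ₗ[A] X) := by
      rw [LinearMap.range_eq_top.mpr hsurjP]; exact finrank_top ℂ _
    have e4 := finrank_ker_postComp (Z := Y) φ
    have e5 := finrank_ker_postComp (Z := P) φ
    have e6 := hdim ↥K
    have e7 := hdim P
    have e8 := hdim X
    rw [← hK] at e4 e5
    omega
  -- there exists a nonzero `ψ : Y →ₗ[A] X`
  have hφne : φ ≠ 0 := by
    intro h0
    have h1 : LinearMap.range φ = ⊤ := LinearMap.range_eq_top.mpr hφ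
    rw [h0, LinearMap.range_zero] at h1
    exact bot_ne_top h1
  haveI : Nontrivial (Y →ₗ[A] X) := by
    have h1 : 0 < Module.finrank ℂ (P →ₗ[A] X) :=
      Module.finrank_pos_iff.mpr ⟨φ, 0, hφne⟩
    rw [hdim X] at h1
    exact Module.finrank_pos_iff.mp h1
  obtain ⟨ψ, hψ0⟩ := exists_ne (0 : Y →ₗ[A] X)
  have hψsurj : Function.Surjective ψ := by
    rcases eq_bot_or_eq_top (LinearMap.range ψ) with h | h
    · exact absurd (LinearMap.range_eq_bot.mp h) hψ0
    · exact LinearMap.range_eq_top.mp h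
  -- lift `ψ` through `φ` to get `g : Y →ₗ[A] P`
  obtain ⟨g, hg⟩ : ∃ g : Y →ₗ[A] P, φ ∘ₗ g = ψ := by
    obtain ⟨g, hg⟩ := LinearMap.range_eq_top.mp hrangeY ψ
    exact ⟨g, hg⟩
  have hgsurj : Function.Surjective g := hcover Y g (by rw [hg]; exact hψsurj)
  -- precomposition with `g` is injective, hence surjective by dimensions
  have hinj : Function.Injective (preComp g Y) := by
    intro h1 h2 hh
    ext p
    obtain ⟨y, rfl⟩ := hgsurj p
    exact congrFun (congrArg (⇑) hh) y
  have hsur : Function.Surjective (preComp g Y) :=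
    (LinearMap.injective_iff_surjective_of_finrank_eq_finrank (hdim Y)).mp hinj
  obtain ⟨h, hh⟩ := hsur LinearMap.id
  have hginj : Function.Injective g := by
    have hli : ∀ y, h (g y) = y := fun y => congrFun (congrArg (⇑) hh) y
    intro y1 y2 he
    rw [← hli y1, ← hli y2, he]
  exact ⟨(LinearEquiv.ofBijective g ⟨hginj, hgsurj⟩).symm⟩
end

section
/- Let P and Y be admissible A-modules and β : P → Y a surjective A-linear map such that dim_ℂ Hom_A(Y, P) = dim_ℂ Hom_A(P, P). Then there exists an A-linear map γ : Y → P with γ ∘ β = id_P; consequently β is an isomorphism of A-modules. -/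
universe u v

/-- If `β : P → Y` is a surjective `A`-linear map between admissible `A`-modules and
`dim_ℂ Hom_A(Y, P) = dim_ℂ Hom_A(P, P)`, then `β` splits: there is `γ : Y → P` with
`γ ∘ β = id`; consequently `β` is an isomorphism. -/
theorem stmt_7 (A : Type u) [Ring A] [Algebra ℂ A]
    (P : Type v) [AddCommGroup P] [Module ℂ P] [Module A P] [IsScalarTower ℂ A P]
    [FiniteDimensional ℂ P]
    (Y : Type v) [AddCommGroup Y] [Module ℂ Y] [Module A Y] [IsScalarTower ℂ A Y]
    [FiniteDimensional ℂ Y]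
    (β : P →ₗ[A] Y) (hβ : Function.Surjective β)
    (hdim : Module.finrank ℂ (Y →ₗ[A] P) = Module.finrank ℂ (P →ₗ[A] P)) :
    (∃ γ : Y →ₗ[A] P, γ ∘ₗ β = LinearMap.id) ∧ Function.Bijective β := by
  -- Hom spaces are finite-dimensional over ℂ
  have hfdYP : FiniteDimensional ℂ (Y →ₗ[A] P) :=
    FiniteDimensional.of_injective
      (LinearMap.restrictScalarsₗ ℂ A Y P ℂ) (LinearMap.restrictScalars_injective ℂ)
  have hfdPP : FiniteDimensional ℂ (P →ₗ[A] P) :=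
    FiniteDimensional.of_injective
      (LinearMap.restrictScalarsₗ ℂ A P P ℂ) (LinearMap.restrictScalars_injective ℂ)
  -- the ℂ-linear map "precompose with β"
  let T : (Y →ₗ[A] P) →ₗ[ℂ] (P →ₗ[A] P) :=
    { toFun := fun γ => γ ∘ₗ β
      map_add' := fun γ₁ γ₂ => by ext x; simp
      map_smul' := fun c γ => by ext x; simp }
  have hTinj : Function.Injective T := by
    intro γ₁ γ₂ h
    ext y
    obtain ⟨x, rfl⟩ := hβ y
    exact LinearMap.congr_fun h x
  have hTsurj : Function.Surjective T :=
    (LinearMap.injective_iff_surjective_of_finrank_eq_finrank hdim).mp hTinj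
  obtain ⟨γ, hγ⟩ := hTsurj LinearMap.id
  refine ⟨⟨γ, hγ⟩, ?_, hβ⟩
  intro x₁ x₂ h
  have h1 : γ (β x₁) = x₁ := LinearMap.congr_fun hγ x₁
  have h2 : γ (β x₂) = x₂ := LinearMap.congr_fun hγ x₂
  rw [← h1, ← h2, h]
end

section
/- Assume that the maximal generalized eigenspaces of L span V, i.e. the supremum over μ ∈ ℂ of the maximal generalized eigenspaces of L equals V. Let S be a set of ℂ-linear endomorphisms of V such that for every g ∈ S there exists c_g ∈ ℂ with L ∘ g − g ∘ L = c_g • g. Let Ω be the subspace ⋂_{g ∈ S} ker g of V. Then Ω = ⨆_{μ ∈ ℂ} (Ω ⊓ maxGenEigenspace(L, μ)); that is, for every w ∈ Ω, each component of w with respect to the generalized eigenspace decomposition of L again lies in Ω, so Ω is spanned by its intersections with the maximal generalized eigenspaces of L. -/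
universe u

lemma aux_indep_sum_zero {ι N : Type*} [AddCommGroup N] [Module ℂ N]
    {p : ι → Submodule ℂ N} (hp : iSupIndep p) (f : ι →₀ N) (hf : ∀ i, f i ∈ p i)
    (hsum : (f.sum fun _ x => x) = 0) (i : ι) : f i = 0 := by
  classical
  by_cases hi : i ∈ f.support
  · have hdisj := iSupIndep_def.mp hp i
    have hexp : f i + ∑ j ∈ f.support.erase i, f j = 0 := by
      rw [Finset.add_sum_erase _ _ hi]
      exact hsum
    have hneg : f i = -∑ j ∈ f.support.erase i, f j :=
      eq_neg_of_add_eq_zero_left hexp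
    have hmem : f i ∈ ⨆ j ≠ i, p j := by
      rw [hneg]
      refine neg_mem (Submodule.sum_mem _ fun j hj => ?_)
      have hji : j ≠ i := (Finset.mem_erase.mp hj).1
      exact Submodule.mem_iSup_of_mem j (Submodule.mem_iSup_of_mem hji (hf j))
    exact (Submodule.disjoint_def.mp hdisj) _ (hf i) hmem
  · exact Finsupp.notMem_support_iff.mp hi

lemma aux_mapsTo {V : Type u} [AddCommGroup V] [Module ℂ V] (L g : Module.End ℂ V)
    (c : ℂ) (hc : L * g - g * L = c • g) (μ : ℂ) {x : V}
    (hx : x ∈ L.maxGenEigenspace μ) : g x ∈ L.maxGenEigenspace (μ + c) := by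
  rw [Module.End.mem_maxGenEigenspace] at hx ⊢
  obtain ⟨k, hk⟩ := hx
  have heq : L * g = g * L + c • g := by
    have := hc
    rw [sub_eq_iff_eq_add] at this
    rw [this]; abel
  have key : (L - (μ + c) • 1) * g = g * (L - μ • 1) := by
    rw [sub_mul, mul_sub, smul_mul_assoc, one_mul, mul_smul_comm, mul_one, add_smul, heq]
    abel
  have key2 : ∀ n : ℕ, (L - (μ + c) • 1) ^ n * g = g * (L - μ • 1) ^ n := by
    intro n
    induction n with
    | zero => simp
    | succ n ih =>
      rw [pow_succ', mul_assoc, ih, ← mul_assoc, key, mul_assoc, ← pow_succ']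
  refine ⟨k, ?_⟩
  have h2 := congrArg (fun T : Module.End ℂ V => T x) (key2 k)
  simp only [Module.End.mul_apply] at h2
  rw [h2, hk, map_zero]

/-- Suppose the maximal generalized eigenspaces of `L` span `V`, and `S` is a set of
endomorphisms each satisfying `[L, g] = c_g • g` for some `c_g ∈ ℂ`. Then the common
kernel `Ω = ⋂_{g ∈ S} ker g` is spanned by its intersections with the maximal
generalized eigenspaces of `L`. -/
theorem stmt_9 (V : Type u) [AddCommGroup V] [Module ℂ V] (L : Module.End ℂ V)
    (hspan : (⨆ μ : ℂ, L.maxGenEigenspace μ) = ⊤)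
    (S : Set (Module.End ℂ V))
    (hS : ∀ g ∈ S, ∃ c : ℂ, L * g - g * L = c • g)
    (Ω : Submodule ℂ V) (hΩ : Ω = ⨅ g ∈ S, LinearMap.ker g) :
    Ω = ⨆ μ : ℂ, Ω ⊓ L.maxGenEigenspace μ := by
  classical
  refine le_antisymm ?_ (iSup_le fun μ => inf_le_left)
  intro w hw
  have hw' : w ∈ ⨆ μ : ℂ, L.maxGenEigenspace μ := by rw [hspan]; trivial
  obtain ⟨f, hf, hsum⟩ := (Submodule.mem_iSup_iff_exists_finsupp _ _).mp hw'
  suffices hfm : ∀ μ, f μ ∈ Ω by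
    rw [← hsum, Finsupp.sum]
    exact Submodule.sum_mem _ fun μ _ =>
      Submodule.mem_iSup_of_mem μ ⟨hfm μ, hf μ⟩
  intro μ
  rw [hΩ]
  simp only [Submodule.mem_iInf, LinearMap.mem_ker]
  intro g hg
  obtain ⟨c, hc⟩ := hS g hg
  have hgw : g w = 0 := by
    rw [hΩ] at hw
    simp only [Submodule.mem_iInf, LinearMap.mem_ker] at hw
    exact hw g hg
  -- the transported finsupp
  set f' : ℂ →₀ V :=
    Finsupp.mapDomain (· + c) (Finsupp.mapRange ⇑g (map_zero g) f) with hf'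
  have hinj : Function.Injective (· + c) := add_left_injective c
  have hmem' : ∀ ν, f' ν ∈ L.maxGenEigenspace ν := by
    intro ν
    have hν : ν = (ν - c) + c := by ring
    rw [hf']
    rw [hν, Finsupp.mapDomain_apply hinj, Finsupp.mapRange_apply]
    exact aux_mapsTo L g c hc _ (hf (ν - c))
  have hsum' : (f'.sum fun _ x => x) = 0 := by
    rw [hf', Finsupp.sum_mapDomain_index (fun _ => rfl) (fun _ _ _ => rfl),
      Finsupp.sum_mapRange_index (fun _ => rfl)]
    calc (f.sum fun _ x => g x) = g (f.sum fun _ x => x) := (map_finsuppSum g f _).symm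
    _ = 0 := by rw [hsum, hgw]
  have := aux_indep_sum_zero (L.independent_maxGenEigenspace) f' hmem' hsum' (μ + c)
  rw [hf', Finsupp.mapDomain_apply hinj, Finsupp.mapRange_apply] at this
  exact this
end
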